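/- Let R be a *-ring in which every idempotent is a projection. Then every idempotent of R is central. -/
import Mathlib


theorem stmt_3 (R : Type*) [Ring R] [StarRing R]
    (hproj : ∀ e : R, e * e = e → star e = e) :
    ∀ e : R, e * e = e → ∀ x : R, e * x = x * e := by
  intro e he x
  have he' : star e = e := hproj e he
  have h1 : e * (1 - e) = 0 := by rw [mul_sub, mul_one, he, sub_self]
  have h2 : (1 - e) * e = 0 := by rw [sub_mul, one_mul, he, sub_self]
  -- f = e + e*x*(1-e) is idempotent
  have ha1 : e * (e * x * (1 - e)) = e * x * (1 - e) := by
    rw [← mul_assoc, ← mul_assoc, he]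
  have ha2 : (e * x * (1 - e)) * e = 0 := by rw [mul_assoc, h2, mul_zero]
  have ha0 : (1 - e) * (e * x * (1 - e)) = 0 := by
    rw [← mul_assoc, ← mul_assoc, h2, zero_mul, zero_mul]
  have ha3 : (e * x * (1 - e)) * (e * x * (1 - e)) = 0 := by
    rw [mul_assoc (e * x) (1 - e), ha0, mul_zero]
  have hf : (e + e * x * (1 - e)) * (e + e * x * (1 - e)) = e + e * x * (1 - e) := by
    calc (e + e * x * (1 - e)) * (e + e * x * (1 - e))
        = e * e + e * (e * x * (1 - e)) + (e * x * (1 - e)) * e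
          + (e * x * (1 - e)) * (e * x * (1 - e)) := by noncomm_ring
      _ = e + e * x * (1 - e) := by rw [he, ha1, ha2, ha3, add_zero, add_zero]
  -- g = e + (1-e)*x*e is idempotent
  have hb1 : e * ((1 - e) * x * e) = 0 := by
    rw [← mul_assoc, ← mul_assoc, h1, zero_mul, zero_mul]
  have hb2 : ((1 - e) * x * e) * e = (1 - e) * x * e := by rw [mul_assoc, he]
  have hb3 : ((1 - e) * x * e) * ((1 - e) * x * e) = 0 := by
    rw [mul_assoc ((1 - e) * x) e, hb1, mul_zero]
  have hg : (e + (1 - e) * x * e) * (e + (1 - e) * x * e) = e + (1 - e) * x * e := by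
    calc (e + (1 - e) * x * e) * (e + (1 - e) * x * e)
        = e * e + e * ((1 - e) * x * e) + ((1 - e) * x * e) * e
          + ((1 - e) * x * e) * ((1 - e) * x * e) := by noncomm_ring
      _ = e + (1 - e) * x * e := by rw [he, hb1, hb2, hb3, add_zero, add_zero]
  have hsf := hproj _ hf
  have hsg := hproj _ hg
  have hstarf : star (e + e * x * (1 - e)) = e + (1 - e) * star x * e := by
    simp [star_sub, star_mul, he', mul_assoc]
  have hstarg : star (e + (1 - e) * x * e) = e + e * star x * (1 - e) := by
    simp [star_sub, star_mul, he', mul_assoc]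
  rw [hstarf] at hsf
  rw [hstarg] at hsg
  -- multiply hsf on the left by e to get e*x*(1-e) = 0
  have hc1 : e * ((1 - e) * star x * e) = 0 := by
    rw [← mul_assoc, ← mul_assoc, h1, zero_mul, zero_mul]
  have hfe : e * x * (1 - e) = 0 := by
    have h := congrArg (fun y => e * y) hsf
    simp only [mul_add] at h
    rw [he, hc1, ha1, add_zero] at h
    exact (left_eq_add.mp h)
  -- multiply hsg on the right by e to get (1-e)*x*e = 0
  have hc2 : (e * star x * (1 - e)) * e = 0 := by rw [mul_assoc, h2, mul_zero]
  have hge : (1 - e) * x * e = 0 := by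
    have h := congrArg (fun y => y * e) hsg
    simp only [add_mul] at h
    rw [he, hc2, hb2, add_zero] at h
    exact (left_eq_add.mp h)
  have hA : e * x = e * x * e := by
    have h3 : e * x * (1 - e) = e * x - e * x * e := by noncomm_ring
    rw [h3, sub_eq_zero] at hfe
    exact hfe
  have hB : x * e = e * x * e := by
    have h3 : (1 - e) * x * e = x * e - e * x * e := by noncomm_ring
    rw [h3, sub_eq_zero] at hge
    exact hge
  exact hA.trans hB.symm
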